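/- arXiv:2002.03989 — 6 statements merged into one kernel-verified Lean document; each statement's English description precedes it below -/
import Mathlib

section
/- Let I ≥ 1, let ε > 0, and let u ∈ ℝ^I belong to the probability simplex U. Then the supremum over all o ∈ ℝ^I of ⟨o, u⟩ − M_ε(o) equals ε · ∑_{i=1}^I u_i · log(u_i). (Fenchel–Legendre conjugate of the log-sum-exp function, on-simplex case of Proposition 1.) -/
open Finset Real Filter

lemma logSumExp_upper_bound
    (I : ℕ) (hI : 1 ≤ I) (ε : ℝ) (hε : 0 < ε)
    (u : Fin I → ℝ) (hu_nonneg : ∀ i, 0 ≤ u i) (hu_sum : ∑ i, u i = 1)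
    (o : Fin I → ℝ) :
    (∑ i, o i * u i) - ε * Real.log (∑ i, Real.exp (o i / ε))
      ≤ ε * ∑ i, u i * Real.log (u i) := by
  have hne : (Finset.univ : Finset (Fin I)).Nonempty := ⟨⟨0, hI⟩, by simp⟩
  set t : Fin I → ℝ := fun i => o i / ε with ht
  have hS : 0 < ∑ i, Real.exp (t i) :=
    Finset.sum_pos (fun i _ => Real.exp_pos _) hne
  set z : Fin I → ℝ := fun i => Real.exp (t i) / u i with hz
  have hz0 : ∀ i, 0 ≤ z i := fun i => div_nonneg (Real.exp_pos _).le (hu_nonneg i)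
  -- AM-GM
  have hgm : ∏ i, z i ^ u i ≤ ∑ i, u i * z i :=
    Real.geom_mean_le_arith_mean_weighted _ u z (fun i _ => hu_nonneg i) hu_sum
      (fun i _ => hz0 i)
  have hsum_le : ∑ i, u i * z i ≤ ∑ i, Real.exp (t i) := by
    apply Finset.sum_le_sum
    intro i _
    rcases eq_or_lt_of_le (hu_nonneg i) with h | h
    · rw [← h]; simpa using (Real.exp_pos (t i)).le
    · rw [hz]; field_simp; exact le_rfl
  have hprod_pos : 0 < ∏ i, z i ^ u i := by
    apply Finset.prod_pos
    intro i _
    rcases eq_or_lt_of_le (hu_nonneg i) with h | h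
    · rw [← h, Real.rpow_zero]; exact one_pos
    · exact Real.rpow_pos_of_pos (div_pos (Real.exp_pos _) h) _
  have hlog : Real.log (∏ i, z i ^ u i) ≤ Real.log (∑ i, Real.exp (t i)) :=
    Real.log_le_log hprod_pos (hgm.trans hsum_le)
  have hlog_prod : Real.log (∏ i, z i ^ u i) = ∑ i, u i * (t i - Real.log (u i)) := by
    rw [Real.log_prod (fun i _ => ?_)]
    · apply Finset.sum_congr rfl
      intro i _
      rcases eq_or_lt_of_le (hu_nonneg i) with h | h
      · rw [← h]
        simp [hz, Real.rpow_zero]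
      · rw [Real.log_rpow (div_pos (Real.exp_pos _) h),
          Real.log_div (Real.exp_ne_zero _) (ne_of_gt h), Real.log_exp]
    · rcases eq_or_lt_of_le (hu_nonneg i) with h | h
      · rw [← h, Real.rpow_zero]; exact one_ne_zero
      · exact ne_of_gt (Real.rpow_pos_of_pos (div_pos (Real.exp_pos _) h) _)
  have key : ∑ i, u i * (t i - Real.log (u i)) ≤ Real.log (∑ i, Real.exp (t i)) := by
    rw [← hlog_prod]; exact hlog
  have expand : ∑ i, u i * (t i - Real.log (u i))
      = (∑ i, o i * u i) / ε - ∑ i, u i * Real.log (u i) := by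
    calc ∑ i, u i * (t i - Real.log (u i))
        = ∑ i, ((o i * u i) / ε - u i * Real.log (u i)) := by
          apply Finset.sum_congr rfl
          intro i _
          show u i * (o i / ε - Real.log (u i)) = _
          field_simp
      _ = (∑ i, o i * u i) / ε - ∑ i, u i * Real.log (u i) := by
          rw [Finset.sum_sub_distrib, ← Finset.sum_div]
  rw [expand] at key
  have := mul_le_mul_of_nonneg_left key hε.le
  calc (∑ i, o i * u i) - ε * Real.log (∑ i, Real.exp (o i / ε))
      = ε * ((∑ i, o i * u i) / ε - ∑ i, u i * Real.log (u i))
        - ε * Real.log (∑ i, Real.exp (t i)) + ε * ∑ i, u i * Real.log (u i) := by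
        field_simp; ring
    _ ≤ ε * Real.log (∑ i, Real.exp (t i))
        - ε * Real.log (∑ i, Real.exp (t i)) + ε * ∑ i, u i * Real.log (u i) := by
        linarith
    _ = ε * ∑ i, u i * Real.log (u i) := by ring

/-- Fenchel–Legendre conjugate of the log-sum-exp function `Mε(o) = ε log ∑ exp(oᵢ/ε)`:
for `u` in the probability simplex, the supremum over `o` of `⟨o,u⟩ - Mε(o)` equals
`ε ∑ uᵢ log uᵢ` (on-simplex case of Proposition 1). -/
theorem logSumExp_fenchel_conjugate_on_simplex
    (I : ℕ) (hI : 1 ≤ I) (ε : ℝ) (hε : 0 < ε)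
    (u : Fin I → ℝ) (hu_nonneg : ∀ i, 0 ≤ u i) (hu_sum : ∑ i, u i = 1) :
    IsLUB {y : ℝ | ∃ o : Fin I → ℝ,
        y = (∑ i, o i * u i) - ε * Real.log (∑ i, Real.exp (o i / ε))}
      (ε * ∑ i, u i * Real.log (u i)) := by
  constructor
  · rintro y ⟨o, rfl⟩
    exact logSumExp_upper_bound I hI ε hε u hu_nonneg hu_sum o
  · intro b hb
    -- approximating sequence
    set c : ℝ := ((Finset.univ.filter (fun i => u i = 0)).card : ℝ) with hc
    have hc0 : 0 ≤ c := by positivity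
    set f : ℕ → ℝ := fun n =>
      ε * (∑ i, u i * Real.log (u i)) - ε * Real.log (1 + c * Real.exp (-(n : ℝ) / ε)) with hf
    have hmem : ∀ n : ℕ, f n ∈ {y : ℝ | ∃ o : Fin I → ℝ,
        y = (∑ i, o i * u i) - ε * Real.log (∑ i, Real.exp (o i / ε))} := by
      intro n
      refine ⟨fun i => if u i = 0 then -(n : ℝ) else ε * Real.log (u i), ?_⟩
      have h1 : ∑ i, (if u i = 0 then -(n : ℝ) else ε * Real.log (u i)) * u i
          = ε * ∑ i, u i * Real.log (u i) := by
        rw [Finset.mul_sum]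
        apply Finset.sum_congr rfl
        intro i _
        by_cases h : u i = 0
        · simp [h]
        · simp only [h, if_false]; ring
      have h2 : ∑ i, Real.exp ((if u i = 0 then -(n : ℝ) else ε * Real.log (u i)) / ε)
          = 1 + c * Real.exp (-(n : ℝ) / ε) := by
        have split := Finset.sum_filter_add_sum_filter_not Finset.univ
          (fun i => u i = 0)
          (fun i => Real.exp ((if u i = 0 then -(n : ℝ) else ε * Real.log (u i)) / ε))
        rw [← split]
        have hA : ∑ i ∈ Finset.univ.filter (fun i => u i = 0),
            Real.exp ((if u i = 0 then -(n : ℝ) else ε * Real.log (u i)) / ε)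
            = c * Real.exp (-(n : ℝ) / ε) := by
          rw [Finset.sum_congr rfl (fun i hi => ?_), Finset.sum_const, nsmul_eq_mul]
          simp only [Finset.mem_filter] at hi
          rw [if_pos hi.2]
        have hB : ∑ i ∈ Finset.univ.filter (fun i => ¬ u i = 0),
            Real.exp ((if u i = 0 then -(n : ℝ) else ε * Real.log (u i)) / ε)
            = 1 := by
          have heq : ∀ i ∈ Finset.univ.filter (fun i => ¬ u i = 0),
              Real.exp ((if u i = 0 then -(n : ℝ) else ε * Real.log (u i)) / ε) = u i := by
            intro i hi
            simp only [Finset.mem_filter] at hi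
            rw [if_neg hi.2]
            have hpos : 0 < u i := lt_of_le_of_ne (hu_nonneg i) (Ne.symm hi.2)
            rw [mul_div_cancel_left₀ _ (ne_of_gt hε), Real.exp_log hpos]
          rw [Finset.sum_congr rfl heq,
            Finset.sum_filter_of_ne (fun x _ hx => hx), hu_sum]
        rw [hA, hB]
        ring
      rw [h1, h2, hf]
    have hfle : ∀ n, f n ≤ b := fun n => hb (hmem n)
    -- f tends to the target
    have htend : Tendsto f atTop (nhds (ε * ∑ i, u i * Real.log (u i))) := by
      have h1 : Tendsto (fun n : ℕ => -(n : ℝ) / ε) atTop atBot := by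
        apply Tendsto.atBot_div_const hε
        exact tendsto_neg_atBot_iff.mpr tendsto_natCast_atTop_atTop
      have h2 : Tendsto (fun n : ℕ => Real.exp (-(n : ℝ) / ε)) atTop (nhds 0) :=
        Real.tendsto_exp_atBot.comp h1
      have h3 : Tendsto (fun n : ℕ => 1 + c * Real.exp (-(n : ℝ) / ε)) atTop (nhds 1) := by
        have := (tendsto_const_nhds (x := (1:ℝ)) (f := atTop (α := ℕ))).add
          ((tendsto_const_nhds (x := c)).mul h2)
        simpa using this
      have h4 : Tendsto (fun n : ℕ => Real.log (1 + c * Real.exp (-(n : ℝ) / ε)))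
          atTop (nhds 0) := by
        have := (Real.continuousAt_log one_ne_zero).tendsto.comp h3
        simpa [Function.comp_def] using this
      have h5 := (tendsto_const_nhds (x := ε * ∑ i, u i * Real.log (u i))
        (f := atTop (α := ℕ))).sub ((tendsto_const_nhds (x := ε)).mul h4)
      simpa using h5
    exact le_of_tendsto' htend hfle
end

section
/- Let I ≥ 1 and let o ∈ ℝ^I. Then M_ε(o) converges to max_{1 ≤ i ≤ I} o_i as ε → 0 from the right; that is, the function ε ↦ ε · log(∑_{i=1}^I exp(o_i/ε)) tends to max_i o_i along the filter of positive ε tending to 0. -/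
/-- As `ε → 0⁺`, the log-sum-exp `Mε(o) = ε log ∑ exp(oᵢ/ε)` tends to `max oᵢ`. -/
theorem logSumExp_tendsto_max
    (I : ℕ) (hI : 1 ≤ I) (o : Fin I → ℝ) :
    Filter.Tendsto (fun ε : ℝ => ε * Real.log (∑ i, Real.exp (o i / ε)))
      (nhdsWithin 0 (Set.Ioi 0))
      (nhds (Finset.univ.sup' ⟨⟨0, hI⟩, Finset.mem_univ _⟩ o)) := by
  set m := Finset.univ.sup' ⟨⟨0, hI⟩, Finset.mem_univ _⟩ o with hm
  have hIpos : (0:ℝ) < I := by exact_mod_cast hI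
  -- upper bound function: m + ε * log I
  have hub : Filter.Tendsto (fun ε : ℝ => m + ε * Real.log I)
      (nhdsWithin 0 (Set.Ioi 0)) (nhds m) := by
    have h : Continuous (fun ε : ℝ => m + ε * Real.log I) :=
      continuous_const.add (continuous_id.mul continuous_const)
    have := h.tendsto 0
    simp only [zero_mul, add_zero] at this
    exact this.mono_left nhdsWithin_le_nhds
  refine tendsto_of_tendsto_of_tendsto_of_le_of_le' tendsto_const_nhds hub ?_ ?_
  · filter_upwards [self_mem_nhdsWithin] with ε hε
    have hεpos : (0:ℝ) < ε := hε
    -- there is i with o i = m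
    obtain ⟨i, _, hi⟩ := Finset.exists_mem_eq_sup' ⟨⟨0, hI⟩, Finset.mem_univ _⟩ o
    have hS : Real.exp (m / ε) ≤ ∑ j, Real.exp (o j / ε) := by
      have := Finset.single_le_sum (f := fun j => Real.exp (o j / ε))
        (fun j _ => (Real.exp_pos _).le) (Finset.mem_univ i)
      rwa [← hi, ← hm] at this
    have hlog : m / ε ≤ Real.log (∑ j, Real.exp (o j / ε)) := by
      calc m / ε = Real.log (Real.exp (m / ε)) := (Real.log_exp _).symm
        _ ≤ _ := Real.log_le_log (Real.exp_pos _) hS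
    calc m = ε * (m / ε) := by field_simp
      _ ≤ ε * Real.log (∑ j, Real.exp (o j / ε)) := by
          exact mul_le_mul_of_nonneg_left hlog hεpos.le
  · filter_upwards [self_mem_nhdsWithin] with ε hε
    have hεpos : (0:ℝ) < ε := hε
    have hS : ∑ j, Real.exp (o j / ε) ≤ I * Real.exp (m / ε) := by
      calc ∑ j, Real.exp (o j / ε) ≤ ∑ _j : Fin I, Real.exp (m / ε) := by
            apply Finset.sum_le_sum
            intro j _
            apply Real.exp_le_exp.mpr
            gcongr
            exact Finset.le_sup' o (Finset.mem_univ j)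
        _ = I * Real.exp (m / ε) := by simp [mul_comm]
    have hSpos : (0:ℝ) < ∑ j, Real.exp (o j / ε) :=
      Finset.sum_pos (fun j _ => Real.exp_pos _) ⟨⟨0, hI⟩, Finset.mem_univ _⟩
    have hlog : Real.log (∑ j, Real.exp (o j / ε)) ≤ Real.log I + m / ε := by
      calc Real.log (∑ j, Real.exp (o j / ε)) ≤ Real.log (I * Real.exp (m / ε)) :=
            Real.log_le_log hSpos hS
        _ = Real.log I + m / ε := by
            rw [Real.log_mul (ne_of_gt hIpos) (ne_of_gt (Real.exp_pos _)), Real.log_exp]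
    calc ε * Real.log (∑ j, Real.exp (o j / ε)) ≤ ε * (Real.log I + m / ε) :=
          mul_le_mul_of_nonneg_left hlog hεpos.le
      _ = m + ε * Real.log I := by field_simp; ring
end

section
/- Let Ω be a finite set, I ≥ 1, λ ≥ 0, and let K : Ω × Ω → ℝ be symmetric and positive semidefinite, i.e. K(x,y) = K(y,x) and ∑_{x,y ∈ Ω} K(x,y) w(x) w(y) ≥ 0 for every w : Ω → ℝ. Then the threshold-dynamics regularizer R(u) = λ · ∑_{i=1}^I ∑_{x ∈ Ω} u_i(x) ∑_{y ∈ Ω} K(x,y)(1 − u_i(y)), defined for u : Ω → ℝ^I, is a concave function of u on all of (ℝ^I)^Ω. -/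
lemma td_key {Ω : Type*} [Fintype Ω] (K : Ω → Ω → ℝ) (a b : ℝ) (hab : a + b = 1)
    (p q : Ω → ℝ) :
    ∑ x : Ω, (a * p x + b * q x) * ∑ y : Ω, K x y * (1 - (a * p y + b * q y))
      = a * (∑ x : Ω, p x * ∑ y : Ω, K x y * (1 - p y))
        + b * (∑ x : Ω, q x * ∑ y : Ω, K x y * (1 - q y))
        + a * b * ∑ x : Ω, ∑ y : Ω, K x y * (p x - q x) * (p y - q y) := by
  have hb : b = 1 - a := by linarith
  subst hb
  simp only [Finset.mul_sum]
  rw [← Finset.sum_add_distrib, ← Finset.sum_add_distrib]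
  refine Finset.sum_congr rfl fun x _ => ?_
  rw [← Finset.sum_add_distrib, ← Finset.sum_add_distrib]
  refine Finset.sum_congr rfl fun y _ => ?_
  ring

/-- If `K` is symmetric positive semidefinite and `λ ≥ 0`, the threshold-dynamics
regularizer `R(u) = λ ∑ᵢ ∑ₓ uᵢ(x) ∑_y K(x,y)(1 - uᵢ(y))` is concave on `(ℝ^I)^Ω`. -/
theorem threshold_dynamics_regularizer_concave
    (Ω : Type*) [Fintype Ω] (I : ℕ) (hI : 1 ≤ I) (lam : ℝ) (hlam : 0 ≤ lam)
    (K : Ω → Ω → ℝ) (hK_symm : ∀ x y, K x y = K y x)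
    (hK_psd : ∀ w : Ω → ℝ, 0 ≤ ∑ x : Ω, ∑ y : Ω, K x y * w x * w y) :
    ConcaveOn ℝ Set.univ
      (fun u : Ω → Fin I → ℝ =>
        lam * ∑ i : Fin I, ∑ x : Ω, u x i * ∑ y : Ω, K x y * (1 - u y i)) := by
  refine ⟨convex_univ, fun u _ v _ a b ha hb hab => ?_⟩
  simp only [smul_eq_mul, Pi.add_apply, Pi.smul_apply]
  have hrw : ∀ i : Fin I,
      ∑ x : Ω, (a * u x i + b * v x i) * ∑ y : Ω, K x y * (1 - (a * u y i + b * v y i))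
        = a * (∑ x : Ω, u x i * ∑ y : Ω, K x y * (1 - u y i))
          + b * (∑ x : Ω, v x i * ∑ y : Ω, K x y * (1 - v y i))
          + a * b * ∑ x : Ω, ∑ y : Ω, K x y * (u x i - v x i) * (u y i - v y i) :=
    fun i => td_key K a b hab (fun x => u x i) (fun x => v x i)
  calc a * (lam * ∑ i : Fin I, ∑ x : Ω, u x i * ∑ y : Ω, K x y * (1 - u y i))
        + b * (lam * ∑ i : Fin I, ∑ x : Ω, v x i * ∑ y : Ω, K x y * (1 - v y i))
      ≤ a * (lam * ∑ i : Fin I, ∑ x : Ω, u x i * ∑ y : Ω, K x y * (1 - u y i))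
        + b * (lam * ∑ i : Fin I, ∑ x : Ω, v x i * ∑ y : Ω, K x y * (1 - v y i))
        + lam * (a * b *
            ∑ i : Fin I, ∑ x : Ω, ∑ y : Ω, K x y * (u x i - v x i) * (u y i - v y i)) := by
        have h1 : 0 ≤ ∑ i : Fin I, ∑ x : Ω, ∑ y : Ω,
            K x y * (u x i - v x i) * (u y i - v y i) :=
          Finset.sum_nonneg fun i _ => hK_psd (fun x => u x i - v x i)
        nlinarith [mul_nonneg (mul_nonneg ha hb) h1]
    _ = lam * ∑ i : Fin I,
          ∑ x : Ω, (a * u x i + b * v x i) * ∑ y : Ω, K x y * (1 - (a * u y i + b * v y i)) := by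
        simp only [hrw]
        rw [Finset.sum_add_distrib, Finset.sum_add_distrib, ← Finset.mul_sum,
          ← Finset.mul_sum, ← Finset.mul_sum]
        ring
end

section
/- (Energy descent of the STD-softmax iteration, Algorithm 1.) Let Ω be a finite nonempty set, I ≥ 1, ε > 0, λ ≥ 0, let o : Ω → ℝ^I, and let K : Ω × Ω → ℝ be symmetric and positive semidefinite (K(x,y) = K(y,x) and ∑_{x,y} K(x,y) w(x) w(y) ≥ 0 for all w : Ω → ℝ). Define the total energy E(u) = ∑_{x ∈ Ω} [ −∑_{i=1}^I o_i(x) u_i(x) + ε ∑_{i=1}^I u_i(x) log(u_i(x)) ] + λ ∑_{i=1}^I ∑_{x,y ∈ Ω} u_i(x) K(x,y)(1 − u_i(y)). Let u : Ω → ℝ^I satisfy u(x) ∈ U for every x, set p_i(x) = λ ∑_{y ∈ Ω} K(x,y)(1 − 2 u_i(y)), and define the next iterate pointwise by u'(x) = S_ε(o(x) − p(x)). Then E(u') ≤ E(u). -/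
private lemma gibbs_min {n : ℕ} {ε : ℝ} (hε : 0 < ε) (a v s : Fin n → ℝ)
    (hv : ∀ i, 0 ≤ v i) (hv1 : ∑ i, v i = 1)
    (hs : ∀ i, s i = Real.exp (a i / ε) / ∑ j, Real.exp (a j / ε)) :
    -(∑ i, a i * s i) + ε * ∑ i, s i * Real.log (s i)
      ≤ -(∑ i, a i * v i) + ε * ∑ i, v i * Real.log (v i) := by
  have hne : (Finset.univ : Finset (Fin n)).Nonempty := by
    rcases (Finset.univ : Finset (Fin n)).eq_empty_or_nonempty with h | h
    · exfalso; rw [h, Finset.sum_empty] at hv1; norm_num at hv1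
    · exact h
  set Z := ∑ j, Real.exp (a j / ε) with hZdef
  have hZ : 0 < Z := Finset.sum_pos (fun j _ => Real.exp_pos _) hne
  have hspos : ∀ i, 0 < s i := fun i => by rw [hs]; positivity
  have hlogs : ∀ i, Real.log (s i) = a i / ε - Real.log Z := by
    intro i
    rw [hs i, Real.log_div (Real.exp_ne_zero _) (ne_of_gt hZ), Real.log_exp]
  have hsum_s : ∑ i, s i = 1 := by
    simp only [hs]
    rw [← Finset.sum_div, ← hZdef, div_self hZ.ne']
  have h1 : ∑ i, s i * Real.log (s i) = (∑ i, a i * s i) / ε - Real.log Z := by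
    calc ∑ i, s i * Real.log (s i) = ∑ i, (a i * s i / ε - s i * Real.log Z) :=
          Finset.sum_congr rfl fun i _ => by rw [hlogs i]; ring
      _ = (∑ i, a i * s i) / ε - (∑ i, s i) * Real.log Z := by
          rw [Finset.sum_sub_distrib, ← Finset.sum_div, ← Finset.sum_mul]
      _ = (∑ i, a i * s i) / ε - Real.log Z := by rw [hsum_s, one_mul]
  have hLHS : -(∑ i, a i * s i) + ε * ∑ i, s i * Real.log (s i) = -(ε * Real.log Z) := by
    rw [h1]; field_simp; ring
  have key : ∀ i ∈ Finset.univ, v i - s i ≤ v i * Real.log (v i) - v i * (a i / ε - Real.log Z) := by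
    intro i _
    rcases eq_or_lt_of_le (hv i) with h | h
    · rw [← h]; simp; linarith [(hspos i).le]
    · have h1' : Real.log (s i / v i) ≤ s i / v i - 1 :=
        Real.log_le_sub_one_of_pos (div_pos (hspos i) h)
      rw [Real.log_div (hspos i).ne' h.ne'] at h1'
      rw [← hlogs i]
      have h2 := mul_le_mul_of_nonneg_left h1' h.le
      have h3 : v i * (s i / v i - 1) = s i - v i := by field_simp
      nlinarith [h2, h3]
  have hsum := Finset.sum_le_sum key
  have e1 : ∑ i, (v i - s i) = 0 := by rw [Finset.sum_sub_distrib, hv1, hsum_s]; ring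
  have e2 : ∑ i, (v i * Real.log (v i) - v i * (a i / ε - Real.log Z))
      = ∑ i, v i * Real.log (v i) - ((∑ i, a i * v i) / ε - Real.log Z) := by
    rw [Finset.sum_sub_distrib]
    congr 1
    calc ∑ i, v i * (a i / ε - Real.log Z) = ∑ i, (a i * v i / ε - v i * Real.log Z) :=
          Finset.sum_congr rfl fun i _ => by ring
      _ = (∑ i, a i * v i) / ε - (∑ i, v i) * Real.log Z := by
          rw [Finset.sum_sub_distrib, ← Finset.sum_div, ← Finset.sum_mul]
      _ = (∑ i, a i * v i) / ε - Real.log Z := by rw [hv1, one_mul]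
  rw [e1, e2] at hsum
  have expand : ε * (∑ i, v i * Real.log (v i) - ((∑ i, a i * v i) / ε - Real.log Z))
      = ε * ∑ i, v i * Real.log (v i) - (∑ i, a i * v i) + ε * Real.log Z := by
    field_simp; ring
  have hmul := mul_le_mul_of_nonneg_left hsum hε.le
  rw [mul_zero, expand] at hmul
  linarith [hLHS]

private lemma tripleC {Ω : Type*} [Fintype Ω] {I : ℕ} (K : Ω → Ω → ℝ) (w : Ω → Fin I → ℝ)
    (hw : ∀ x, ∑ i, w x i = 1) :
    ∑ i : Fin I, ∑ x : Ω, ∑ y : Ω, K x y * w x i = ∑ x : Ω, ∑ y : Ω, K x y := by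
  rw [Finset.sum_comm]
  refine Finset.sum_congr rfl fun x _ => ?_
  rw [Finset.sum_comm]
  refine Finset.sum_congr rfl fun y _ => ?_
  rw [← Finset.mul_sum, hw, mul_one]

private lemma quadE {Ω : Type*} [Fintype Ω] {I : ℕ} (K : Ω → Ω → ℝ) (w : Ω → Fin I → ℝ)
    (hw : ∀ x, ∑ i, w x i = 1) :
    ∑ i : Fin I, ∑ x : Ω, ∑ y : Ω, w x i * (K x y * (1 - w y i))
      = (∑ x : Ω, ∑ y : Ω, K x y) - ∑ i : Fin I, ∑ x : Ω, ∑ y : Ω, K x y * w x i * w y i := by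
  have h : ∀ (i : Fin I) (x y : Ω), w x i * (K x y * (1 - w y i))
      = K x y * w x i - K x y * w x i * w y i := by intros; ring
  simp_rw [h, Finset.sum_sub_distrib]
  rw [tripleC K w hw]

private lemma quad_expand {Ω : Type*} [Fintype Ω] (K : Ω → Ω → ℝ)
    (hK : ∀ x y, K x y = K y x) (f g : Ω → ℝ) :
    ∑ x : Ω, ∑ y : Ω, K x y * (f x - g x) * (f y - g y)
      = ∑ x : Ω, ∑ y : Ω, K x y * f x * f y - 2 * ∑ x : Ω, ∑ y : Ω, K x y * f x * g y
        + ∑ x : Ω, ∑ y : Ω, K x y * g x * g y := by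
  have swap : ∑ x : Ω, ∑ y : Ω, K x y * g x * f y = ∑ x : Ω, ∑ y : Ω, K x y * f x * g y := by
    rw [Finset.sum_comm]
    refine Finset.sum_congr rfl fun x _ => Finset.sum_congr rfl fun y _ => by rw [hK]; ring
  have expand : ∀ x y : Ω, K x y * (f x - g x) * (f y - g y)
      = K x y * f x * f y - K x y * f x * g y - K x y * g x * f y + K x y * g x * g y := by
    intros; ring
  simp_rw [expand, Finset.sum_add_distrib, Finset.sum_sub_distrib]
  rw [swap]; ring

private lemma Pexp {Ω : Type*} [Fintype Ω] {I : ℕ} (lam : ℝ) (K : Ω → Ω → ℝ)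
    (u w : Ω → Fin I → ℝ) (p : Ω → Fin I → ℝ)
    (hp : ∀ x i, p x i = lam * ∑ y : Ω, K x y * (1 - 2 * u y i))
    (hw : ∀ x, ∑ i, w x i = 1) :
    ∑ x : Ω, ∑ i, p x i * w x i
      = lam * ((∑ x : Ω, ∑ y : Ω, K x y)
          - 2 * ∑ i : Fin I, ∑ x : Ω, ∑ y : Ω, K x y * w x i * u y i) := by
  have h1 : ∀ (x : Ω) (i : Fin I), p x i * w x i
      = lam * ∑ y : Ω, (K x y * w x i - 2 * (K x y * w x i * u y i)) := by
    intro x i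
    rw [hp, mul_assoc, Finset.sum_mul]
    congr 1
    exact Finset.sum_congr rfl fun y _ => by ring
  simp_rw [h1, ← Finset.mul_sum]
  congr 1
  rw [Finset.sum_comm]
  simp_rw [Finset.sum_sub_distrib, ← Finset.mul_sum]
  rw [tripleC K w hw]

/-- Energy descent of the STD-softmax iteration (Algorithm 1): one step of the soft
threshold dynamics iteration `u'(x) = Sε(o(x) - p(x))`, with
`pᵢ(x) = λ ∑_y K(x,y)(1 - 2 uᵢ(y))`, does not increase the STD energy
`E(u) = ∑ₓ [ -⟨o(x),u(x)⟩ + ε ∑ᵢ uᵢ(x) log uᵢ(x) ] + λ ∑ᵢ ∑_{x,y} uᵢ(x) K(x,y)(1 - uᵢ(y))`. -/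
theorem std_softmax_energy_descent
    (Ω : Type*) [Fintype Ω] [Nonempty Ω] (I : ℕ) (hI : 1 ≤ I)
    (ε : ℝ) (hε : 0 < ε) (lam : ℝ) (hlam : 0 ≤ lam)
    (o : Ω → Fin I → ℝ)
    (K : Ω → Ω → ℝ) (hK_symm : ∀ x y, K x y = K y x)
    (hK_psd : ∀ w : Ω → ℝ, 0 ≤ ∑ x : Ω, ∑ y : Ω, K x y * w x * w y)
    (u : Ω → Fin I → ℝ) (hu : ∀ x, (∀ i, 0 ≤ u x i) ∧ ∑ i, u x i = 1)
    (p : Ω → Fin I → ℝ)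
    (hp : ∀ x i, p x i = lam * ∑ y : Ω, K x y * (1 - 2 * u y i))
    (u' : Ω → Fin I → ℝ)
    (hu' : ∀ x i, u' x i =
      Real.exp ((o x i - p x i) / ε) / ∑ j, Real.exp ((o x j - p x j) / ε)) :
    (∑ x : Ω, (-(∑ i, o x i * u' x i) + ε * ∑ i, u' x i * Real.log (u' x i)))
        + lam * ∑ i : Fin I, ∑ x : Ω, ∑ y : Ω, u' x i * (K x y * (1 - u' y i))
      ≤ (∑ x : Ω, (-(∑ i, o x i * u x i) + ε * ∑ i, u x i * Real.log (u x i)))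
        + lam * ∑ i : Fin I, ∑ x : Ω, ∑ y : Ω, u x i * (K x y * (1 - u y i)) := by
  haveI : Nonempty (Fin I) := Fin.pos_iff_nonempty.mp hI
  have hu'sum : ∀ x, ∑ i, u' x i = 1 := by
    intro x
    simp only [hu']
    rw [← Finset.sum_div, div_self]
    exact (Finset.sum_pos (fun j _ => Real.exp_pos _) Finset.univ_nonempty).ne'
  -- entropy part: softmax is the Gibbs minimizer
  have ent : ∑ x : Ω, (-(∑ i, (o x i - p x i) * u' x i) + ε * ∑ i, u' x i * Real.log (u' x i))
      ≤ ∑ x : Ω, (-(∑ i, (o x i - p x i) * u x i) + ε * ∑ i, u x i * Real.log (u x i)) :=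
    Finset.sum_le_sum fun x _ =>
      gibbs_min hε (fun i => o x i - p x i) (u x) (u' x) (hu x).1 (hu x).2 (fun i => hu' x i)
  have split : ∀ w : Ω → Fin I → ℝ,
      ∑ x : Ω, (-(∑ i, (o x i - p x i) * w x i) + ε * ∑ i, w x i * Real.log (w x i))
      = ∑ x : Ω, (-(∑ i, o x i * w x i) + ε * ∑ i, w x i * Real.log (w x i))
        + ∑ x : Ω, ∑ i, p x i * w x i := by
    intro w
    rw [← Finset.sum_add_distrib]
    refine Finset.sum_congr rfl fun x _ => ?_
    have h : ∑ i, (o x i - p x i) * w x i = ∑ i, o x i * w x i - ∑ i, p x i * w x i := by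
      rw [← Finset.sum_sub_distrib]
      exact Finset.sum_congr rfl fun i _ => by ring
    rw [h]; ring
  rw [split u', split u] at ent
  -- quadratic part
  have hD : ∑ i : Fin I, ∑ x : Ω, ∑ y : Ω, K x y * (u' x i - u x i) * (u' y i - u y i)
      = ∑ i : Fin I, ∑ x : Ω, ∑ y : Ω, K x y * u' x i * u' y i
        - 2 * ∑ i : Fin I, ∑ x : Ω, ∑ y : Ω, K x y * u' x i * u y i
        + ∑ i : Fin I, ∑ x : Ω, ∑ y : Ω, K x y * u x i * u y i := by
    calc ∑ i : Fin I, ∑ x : Ω, ∑ y : Ω, K x y * (u' x i - u x i) * (u' y i - u y i)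
        = ∑ i : Fin I, (∑ x : Ω, ∑ y : Ω, K x y * u' x i * u' y i
            - 2 * ∑ x : Ω, ∑ y : Ω, K x y * u' x i * u y i
            + ∑ x : Ω, ∑ y : Ω, K x y * u x i * u y i) :=
          Finset.sum_congr rfl fun i _ => quad_expand K hK_symm _ _
      _ = _ := by
          rw [Finset.sum_add_distrib, Finset.sum_sub_distrib, ← Finset.mul_sum]
  have hpsd : 0 ≤ ∑ i : Fin I, ∑ x : Ω, ∑ y : Ω, K x y * (u' x i - u x i) * (u' y i - u y i) :=
    Finset.sum_nonneg fun i _ => hK_psd (fun x => u' x i - u x i)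
  rw [hD] at hpsd
  have key : 0 ≤ lam * (∑ i : Fin I, ∑ x : Ω, ∑ y : Ω, K x y * u' x i * u' y i
        - 2 * ∑ i : Fin I, ∑ x : Ω, ∑ y : Ω, K x y * u' x i * u y i
        + ∑ i : Fin I, ∑ x : Ω, ∑ y : Ω, K x y * u x i * u y i) := mul_nonneg hlam hpsd
  have hQu' := quadE K u' hu'sum
  have hQu := quadE K u (fun x => (hu x).2)
  have hPu' := Pexp lam K u u' p hp hu'sum
  have hPu := Pexp lam K u u p hp (fun x => (hu x).2)
  rw [hQu', hQu]
  rw [hPu', hPu] at ent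
  nlinarith [ent, key]
end

section
/- (Proposition 3: strong duality for the volume-preserving STD subproblem, with the additive constant corrected.) Let Ω be a finite nonempty set with |Ω| elements, I ≥ 1, ε > 0, let c : Ω → ℝ^I, and let V ∈ ℝ^I satisfy V_i > 0 for every i and ∑_{i=1}^I V_i = |Ω|. Let U_V be the set of fields u : Ω → ℝ^I with u(x) ∈ U for every x and ∑_{x ∈ Ω} u_i(x) = V_i for every i. Then inf_{u ∈ U_V} ∑_{x ∈ Ω} ∑_{i=1}^I [ −c_i(x) u_i(x) + ε u_i(x) log(u_i(x)) ] = sup_{q ∈ ℝ^I} [ ∑_{i=1}^I q_i V_i − ε ∑_{x ∈ Ω} log( ∑_{i=1}^I exp((c_i(x) + q_i)/ε) ) ]. -/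
open Real Finset

-- tangent line inequality for x log x
lemma mul_log_tangent {x m : ℝ} (hx : 0 ≤ x) (hm : 0 < m) :
    x * Real.log m + x - m ≤ x * Real.log x := by
  rcases hx.eq_or_lt with h | h
  · simp [← h]; linarith
  · have h1 : Real.log (m / x) ≤ m / x - 1 := Real.log_le_sub_one_of_pos (by positivity)
    rw [Real.log_div hm.ne' h.ne'] at h1
    have h2 : x * (Real.log m - Real.log x) ≤ x * (m / x - 1) := by
      exact mul_le_mul_of_nonneg_left h1 hx
    have h3 : x * (m / x - 1) = m - x := by field_simp
    nlinarith

-- Gibbs inequality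
lemma gibbs {ι : Type*} [Fintype ι] [Nonempty ι] {ε : ℝ} (hε : 0 < ε)
    (a u : ι → ℝ) (hu : ∀ i, 0 ≤ u i) (hu1 : ∑ i, u i = 1) :
    ∑ i, a i * u i - ε * Real.log (∑ i, Real.exp (a i / ε)) ≤ ε * ∑ i, u i * Real.log (u i) := by
  set Z : ℝ := ∑ i, Real.exp (a i / ε) with hZ
  have hZpos : 0 < Z := Finset.sum_pos (fun i _ => Real.exp_pos _) univ_nonempty
  have key : ∀ i, u i * (a i / ε - Real.log Z) + u i - Real.exp (a i / ε) / Z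
      ≤ u i * Real.log (u i) := by
    intro i
    have := mul_log_tangent (hu i) (show (0:ℝ) < Real.exp (a i / ε) / Z by positivity)
    rwa [Real.log_div (Real.exp_pos _).ne' hZpos.ne', Real.log_exp] at this
  have hsum := Finset.sum_le_sum (fun i (_ : i ∈ univ) => key i)
  have hm1 : ∑ i, Real.exp (a i / ε) / Z = 1 := by
    rw [← Finset.sum_div]; field_simp; exact hZ.symm
  rw [Finset.sum_sub_distrib, Finset.sum_add_distrib, hu1, hm1] at hsum
  have expand : ∑ i, u i * (a i / ε - Real.log Z)
      = (∑ i, a i * u i) / ε - Real.log Z := by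
    rw [Finset.sum_congr rfl (fun i _ => mul_sub (u i) _ _), Finset.sum_sub_distrib]
    congr 1
    · rw [Finset.sum_div]; exact Finset.sum_congr rfl fun i _ => by ring
    · rw [← Finset.sum_mul, hu1, one_mul]
  rw [expand] at hsum
  have := mul_le_mul_of_nonneg_left hsum hε.le
  calc ∑ i, a i * u i - ε * Real.log Z
      = ε * ((∑ i, a i * u i) / ε - Real.log Z + 1 - 1) := by field_simp; ring
    _ ≤ ε * ∑ i, u i * Real.log (u i) := this

-- equality case: the softmax achieves the bound
lemma gibbs_eq {ι : Type*} [Fintype ι] [Nonempty ι] {ε : ℝ} (hε : 0 < ε) (a : ι → ℝ) :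
    ∑ i, a i * (Real.exp (a i / ε) / (∑ j, Real.exp (a j / ε)))
      - ε * Real.log (∑ j, Real.exp (a j / ε))
    = ε * ∑ i, (Real.exp (a i / ε) / (∑ j, Real.exp (a j / ε)))
        * Real.log (Real.exp (a i / ε) / (∑ j, Real.exp (a j / ε))) := by
  set Z : ℝ := ∑ j, Real.exp (a j / ε) with hZ
  have hZpos : 0 < Z := Finset.sum_pos (fun i _ => Real.exp_pos _) univ_nonempty
  have hm1 : ∑ i, Real.exp (a i / ε) / Z = 1 := by rw [← Finset.sum_div]; field_simp; exact hZ.symm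
  have hlog : ∀ i, Real.log (Real.exp (a i / ε) / Z) = a i / ε - Real.log Z := fun i => by
    rw [Real.log_div (Real.exp_pos _).ne' hZpos.ne', Real.log_exp]
  calc ∑ i, a i * (Real.exp (a i / ε) / Z) - ε * Real.log Z
      = ε * ∑ i, ((Real.exp (a i / ε) / Z) * (a i / ε)
          - (Real.exp (a i / ε) / Z) * Real.log Z) := by
        rw [Finset.sum_sub_distrib, ← Finset.sum_mul, hm1, one_mul, mul_sub]
        congr 1
        rw [Finset.mul_sum]
        exact Finset.sum_congr rfl fun i _ => by field_simp
    _ = ε * ∑ i, (Real.exp (a i / ε) / Z) * Real.log (Real.exp (a i / ε) / Z) := by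
        congr 1
        exact Finset.sum_congr rfl fun i _ => by rw [hlog i, mul_sub]


/-- Proposition 3 (strong duality for the volume-preserving STD subproblem): for volumes
`Vᵢ > 0` with `∑ᵢ Vᵢ = |Ω|`, the infimum of the entropic primal energy over the
volume-constrained simplex fields equals the supremum of the dual objective
`q ↦ ⟨q,V⟩ - ε ∑ₓ log ∑ᵢ exp((cᵢ(x)+qᵢ)/ε)`. -/
theorem vp_std_strong_duality
    (Ω : Type*) [Fintype Ω] [Nonempty Ω] (I : ℕ) (hI : 1 ≤ I) (ε : ℝ) (hε : 0 < ε)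
    (c : Ω → Fin I → ℝ) (V : Fin I → ℝ)
    (hV_pos : ∀ i, 0 < V i) (hV_sum : ∑ i, V i = (Fintype.card Ω : ℝ)) :
    sInf {y : ℝ | ∃ u : Ω → Fin I → ℝ,
        (∀ x, (∀ i, 0 ≤ u x i) ∧ ∑ i, u x i = 1) ∧
        (∀ i, ∑ x : Ω, u x i = V i) ∧
        y = ∑ x : Ω, ∑ i, (-(c x i * u x i) + ε * u x i * Real.log (u x i))}
      = sSup {y : ℝ | ∃ q : Fin I → ℝ,
        y = (∑ i, q i * V i)
          - ε * ∑ x : Ω, Real.log (∑ i, Real.exp ((c x i + q i) / ε))} := by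
  haveI : Nonempty (Fin I) := ⟨⟨0, hI⟩⟩
  set Z : (Fin I → ℝ) → Ω → ℝ := fun q x => ∑ i, Real.exp ((c x i + q i) / ε) with hZ
  have hZpos : ∀ q x, 0 < Z q x := fun q x =>
    Finset.sum_pos (fun i _ => Real.exp_pos _) univ_nonempty
  set D : (Fin I → ℝ) → ℝ :=
    fun q => (∑ i, q i * V i) - ε * ∑ x, Real.log (Z q x) with hD
  set P : (Ω → Fin I → ℝ) → ℝ :=
    fun u => ∑ x, ∑ i, (-(c x i * u x i) + ε * u x i * Real.log (u x i)) with hP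
  -- key rearrangement identity
  have key_eq : ∀ (q : Fin I → ℝ) (u : Ω → Fin I → ℝ), (∀ i, ∑ x, u x i = V i) →
      D q - P u = ∑ x, ((∑ i, (c x i + q i) * u x i - ε * Real.log (Z q x))
        - ε * ∑ i, u x i * Real.log (u x i)) := by
    intro q u h2
    have e1 : ∑ x, ∑ i, (c x i + q i) * u x i
        = (∑ x, ∑ i, c x i * u x i) + ∑ i, q i * V i := by
      calc ∑ x, ∑ i, (c x i + q i) * u x i
          = ∑ x, (∑ i, c x i * u x i + ∑ i, q i * u x i) := by
            refine Finset.sum_congr rfl fun x _ => ?_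
            rw [← Finset.sum_add_distrib]
            exact Finset.sum_congr rfl fun i _ => by ring
        _ = (∑ x, ∑ i, c x i * u x i) + ∑ x, ∑ i, q i * u x i :=
            Finset.sum_add_distrib
        _ = (∑ x, ∑ i, c x i * u x i) + ∑ i, q i * V i := by
            congr 1
            rw [Finset.sum_comm]
            exact Finset.sum_congr rfl fun i _ => by rw [← Finset.mul_sum, h2 i]
    have e2 : P u = -(∑ x, ∑ i, c x i * u x i)
        + ε * ∑ x, ∑ i, u x i * Real.log (u x i) := by
      simp only [hP]
      rw [show (∑ x, ∑ i, (-(c x i * u x i) + ε * u x i * Real.log (u x i)))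
          = ∑ x, ((∑ i, -(c x i * u x i)) + ∑ i, ε * (u x i * Real.log (u x i))) from
        Finset.sum_congr rfl fun x _ => by
          rw [← Finset.sum_add_distrib]; exact Finset.sum_congr rfl fun i _ => by ring]
      rw [Finset.sum_add_distrib]
      congr 1
      · rw [← Finset.sum_neg_distrib]
        exact Finset.sum_congr rfl fun x _ => Finset.sum_neg_distrib _
      · rw [Finset.mul_sum]
        exact Finset.sum_congr rfl fun x _ => (Finset.mul_sum _ _ _).symm
    rw [Finset.sum_sub_distrib, Finset.sum_sub_distrib, e1, e2, hD]
    rw [← Finset.mul_sum, ← Finset.mul_sum]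
    ring
  -- weak duality
  have weak : ∀ (q : Fin I → ℝ) (u : Ω → Fin I → ℝ),
      (∀ x, (∀ i, 0 ≤ u x i) ∧ ∑ i, u x i = 1) → (∀ i, ∑ x, u x i = V i) →
      D q ≤ P u := by
    intro q u h1 h2
    have := key_eq q u h2
    have hle : ∑ x, ((∑ i, (c x i + q i) * u x i - ε * Real.log (Z q x))
        - ε * ∑ i, u x i * Real.log (u x i)) ≤ 0 := by
      refine Finset.sum_nonpos fun x _ => sub_nonpos.2 ?_
      have := gibbs hε (fun i => c x i + q i) (u x) (h1 x).1 (h1 x).2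
      exact this
    linarith
  -- continuity of D
  have hDcont : Continuous D := by
    rw [hD]
    apply Continuous.sub
    · exact continuous_finset_sum _ fun i _ => (continuous_apply i).mul continuous_const
    · apply continuous_const.mul
      refine continuous_finset_sum _ fun x _ => Continuous.log ?_ fun q => (hZpos q x).ne'
      exact continuous_finset_sum _ fun i _ =>
        Real.continuous_exp.comp (((continuous_const (y := c x i)).fun_add (continuous_apply i)).div_const ε)
  -- cost bound
  obtain ⟨C, hC⟩ : ∃ C : ℝ, ∀ (x : Ω) (i : Fin I), -(c x i) ≤ C := by
    obtain ⟨C, hC⟩ := Finite.exists_le (fun p : Ω × Fin I => -(c p.1 p.2))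
    exact ⟨C, fun x i => hC (x, i)⟩
  set v : ℝ := Finset.univ.inf' univ_nonempty V with hv
  have hvpos : 0 < v := (Finset.lt_inf'_iff _).2 fun i _ => hV_pos i
  have hvle : ∀ i, v ≤ V i := fun i => Finset.inf'_le _ (mem_univ i)
  -- coercivity bound: D q ≤ v*(q k - q j) + card*C whenever q j is the max
  have bound : ∀ (q : Fin I → ℝ) (j : Fin I), (∀ i, q i ≤ q j) → ∀ k : Fin I,
      D q ≤ v * (q k - q j) + (Fintype.card Ω : ℝ) * C := by
    intro q j hj k
    have hlogZ : ∀ x, q j - C ≤ ε * Real.log (Z q x) := by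
      intro x
      have h1 : Real.exp ((c x j + q j) / ε) ≤ Z q x := by
        simp only [hZ]
        exact Finset.single_le_sum (fun i _ => (Real.exp_pos ((c x i + q i) / ε)).le)
          (mem_univ j)
      have h2 : (c x j + q j) / ε ≤ Real.log (Z q x) := by
        rw [← Real.log_exp ((c x j + q j) / ε)]
        exact Real.log_le_log (Real.exp_pos _) h1
      have h3 := mul_le_mul_of_nonneg_left h2 hε.le
      rw [mul_div_cancel₀ _ hε.ne'] at h3
      have := hC x j
      linarith
    have hsumlog : (Fintype.card Ω : ℝ) * (q j - C) ≤ ε * ∑ x, Real.log (Z q x) := by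
      rw [Finset.mul_sum]
      calc (Fintype.card Ω : ℝ) * (q j - C) = ∑ _x : Ω, (q j - C) := by
            rw [Finset.sum_const, nsmul_eq_mul, Fintype.card]
        _ ≤ ∑ x, ε * Real.log (Z q x) := Finset.sum_le_sum fun x _ => hlogZ x
    have h4 : ∑ i, (q i - q j) * V i = ∑ i, q i * V i - (Fintype.card Ω : ℝ) * q j := by
      calc ∑ i, (q i - q j) * V i = ∑ i, (q i * V i - q j * V i) :=
            Finset.sum_congr rfl fun i _ => by ring
        _ = ∑ i, q i * V i - ∑ i, q j * V i := Finset.sum_sub_distrib _ _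
        _ = ∑ i, q i * V i - (Fintype.card Ω : ℝ) * q j := by
            rw [← Finset.mul_sum, hV_sum]; ring
    have h5 : ∑ i, (q i - q j) * V i ≤ v * (q k - q j) := by
      calc ∑ i, (q i - q j) * V i ≤ ∑ i, (if i = k then (q k - q j) * V k else 0) := by
            refine Finset.sum_le_sum fun i _ => ?_
            by_cases hik : i = k
            · subst hik; simp
            · rw [if_neg hik]
              exact mul_nonpos_of_nonpos_of_nonneg (sub_nonpos.2 (hj i)) (hV_pos i).le
        _ = (q k - q j) * V k := by simp
        _ ≤ v * (q k - q j) := by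
            have h6 := hvle k
            have hknp : q k - q j ≤ 0 := sub_nonpos.2 (hj k)
            nlinarith
    simp only [hD]
    linarith
  -- shift invariance of D
  have hshift : ∀ (q : Fin I → ℝ) (s : ℝ), D (fun i => q i - s) = D q := by
    intro q s
    have hlog' : ∀ x, Real.log (Z (fun i => q i - s) x) = -s/ε + Real.log (Z q x) := by
      intro x
      have hZ' : Z (fun i => q i - s) x = Real.exp (-s/ε) * Z q x := by
        simp only [hZ, Finset.mul_sum]
        refine Finset.sum_congr rfl fun i _ => ?_
        rw [← Real.exp_add]; congr 1; ring
      rw [hZ', Real.log_mul (Real.exp_pos _).ne' (hZpos q x).ne', Real.log_exp]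
    have e1 : ∑ x, Real.log (Z (fun i => q i - s) x)
        = (Fintype.card Ω : ℝ) * (-s/ε) + ∑ x, Real.log (Z q x) := by
      rw [Finset.sum_congr rfl fun x _ => hlog' x, Finset.sum_add_distrib,
        Finset.sum_const, nsmul_eq_mul, Fintype.card]
    have e2 : ∑ i, (q i - s) * V i = ∑ i, q i * V i - s * (Fintype.card Ω : ℝ) := by
      calc ∑ i, (q i - s) * V i = ∑ i, (q i * V i - s * V i) :=
            Finset.sum_congr rfl fun i _ => by ring
        _ = ∑ i, q i * V i - ∑ i, s * V i := Finset.sum_sub_distrib _ _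
        _ = ∑ i, q i * V i - s * (Fintype.card Ω : ℝ) := by rw [← Finset.mul_sum, hV_sum]
    simp only [hD]
    rw [e1, e2]
    have : ε * ((Fintype.card Ω : ℝ) * (-s/ε)) = -((Fintype.card Ω : ℝ) * s) := by
      field_simp
    rw [mul_add, this]
    ring
  -- D 0 bound
  have hD0le : D 0 ≤ (Fintype.card Ω : ℝ) * C := by
    obtain ⟨j, -, hj⟩ := Finset.exists_max_image (univ : Finset (Fin I))
      (0 : Fin I → ℝ) univ_nonempty
    have := bound 0 j (fun i => hj i (mem_univ i)) j
    simpa using this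
  set R : ℝ := ((Fintype.card Ω : ℝ) * C - D 0) / v with hR
  have hRnn : 0 ≤ R := div_nonneg (by linarith) hvpos.le
  set K : Set (Fin I → ℝ) := Set.pi Set.univ (fun _ => Set.Icc (-R) R) with hK
  have hKcomp : IsCompact K := isCompact_univ_pi fun _ => isCompact_Icc
  have h0K : (0 : Fin I → ℝ) ∈ K := Set.mem_univ_pi.2 fun i => by
    simp only [Pi.zero_apply]; exact ⟨by linarith, hRnn⟩
  obtain ⟨qs, hqsK, hqsmax'⟩ := hKcomp.exists_isMaxOn ⟨0, h0K⟩ hDcont.continuousOn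
  have hqsmax : ∀ y ∈ K, D y ≤ D qs := fun y hy => hqsmax' hy
  have hglob : ∀ q, D q ≤ D qs := by
    intro q
    set s : ℝ := (∑ i, q i) / I with hs
    set q' : Fin I → ℝ := fun i => q i - s with hq'
    have hDq' : D q' = D q := hshift q s
    by_contra hcon
    push_neg at hcon
    have hq'K : q' ∈ K := by
      obtain ⟨j, -, hj⟩ := Finset.exists_max_image univ q' univ_nonempty
      obtain ⟨k, -, hk⟩ := Finset.exists_min_image univ q' univ_nonempty
      have hIne : (I : ℝ) ≠ 0 := Nat.cast_ne_zero.2 (by omega)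
      have hsum0 : ∑ i, q' i = 0 := by
        simp only [hq']
        rw [Finset.sum_sub_distrib, Finset.sum_const, nsmul_eq_mul, hs,
          Finset.card_univ, Fintype.card_fin]
        field_simp; ring
      have hjnn : 0 ≤ q' j := by
        by_contra hneg; push_neg at hneg
        have : ∑ i, q' i < 0 :=
          Finset.sum_neg (fun i _ => lt_of_le_of_lt (hj i (mem_univ i)) hneg) univ_nonempty
        linarith
      have hknp : q' k ≤ 0 := by
        by_contra hpos; push_neg at hpos
        have : 0 < ∑ i, q' i :=
          Finset.sum_pos (fun i _ => lt_of_lt_of_le hpos (hk i (mem_univ i))) univ_nonempty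
        linarith
      have hspread := bound q' j (fun i => hj i (mem_univ i)) k
      have hD0q' : D 0 ≤ D q' := by
        have h7 := hqsmax 0 h0K
        rw [hDq']
        linarith
      have hMm : q' j - q' k ≤ R := by
        rw [hR, le_div_iff₀ hvpos]
        nlinarith
      refine Set.mem_univ_pi.2 fun i => ⟨?_, ?_⟩
      · have h8 := hk i (mem_univ i)
        linarith
      · have h9 := hj i (mem_univ i)
        linarith
    have h10 := hqsmax q' hq'K
    rw [hDq'] at h10
    linarith
  -- stationarity at qs
  have hstat : ∀ i0 : Fin I, ∑ x, Real.exp ((c x i0 + qs i0) / ε) / Z qs x = V i0 := by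
    intro i0
    set φ : ℝ → ℝ := fun t => D (fun i => qs i + if i = i0 then t else 0) with hφ
    have hφ0 : φ 0 = D qs := by
      simp only [hφ]; congr 1; funext i; split <;> simp
    have hmax : IsLocalMax φ 0 :=
      Filter.Eventually.of_forall fun t => by rw [hφ0]; exact hglob _
    have hder : HasDerivAt φ
        (V i0 - ε * ∑ x, Real.exp ((c x i0 + qs i0) / ε) * (1/ε) / Z qs x) 0 := by
      have hlin : HasDerivAt
          (fun t : ℝ => ∑ i, (qs i + if i = i0 then t else 0) * V i) (V i0) 0 := by
        have heq : (fun t : ℝ => ∑ i, (qs i + if i = i0 then t else 0) * V i)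
            = fun t => (∑ i, qs i * V i) + t * V i0 := by
          funext t
          rw [show ∑ i, (qs i + if i = i0 then t else 0) * V i
              = ∑ i, (qs i * V i + if i = i0 then t * V i else 0) from
            Finset.sum_congr rfl fun i _ => by split <;> ring]
          rw [Finset.sum_add_distrib, Finset.sum_ite_eq' univ i0 (fun i => t * V i)]
          simp
        rw [heq]
        simpa using ((hasDerivAt_id (0:ℝ)).mul_const (V i0)).const_add (∑ i, qs i * V i)
      have hlog : ∀ x : Ω, HasDerivAt
          (fun t : ℝ => Real.log (∑ i, Real.exp ((c x i + (qs i + if i = i0 then t else 0)) / ε)))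
          (Real.exp ((c x i0 + qs i0) / ε) * (1/ε) / Z qs x) 0 := by
        intro x
        have hval : ∑ i, Real.exp ((c x i + (qs i + if i = i0 then (0:ℝ) else 0)) / ε)
            = Z qs x := by
          simp only [hZ]
          exact Finset.sum_congr rfl fun i _ => by split <;> simp
        have hZt : HasDerivAt
            (fun t : ℝ => ∑ i, Real.exp ((c x i + (qs i + if i = i0 then t else 0)) / ε))
            (Real.exp ((c x i0 + qs i0) / ε) * (1/ε)) 0 := by
          have hsum : HasDerivAt
              (fun t : ℝ => ∑ i, Real.exp ((c x i + (qs i + if i = i0 then t else 0)) / ε))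
              (∑ i, if i = i0 then Real.exp ((c x i0 + qs i0) / ε) * (1/ε) else 0) 0 := by
            apply HasDerivAt.fun_sum
            intro i _
            by_cases hi : i = i0
            · subst hi
              simp only [if_pos rfl]
              have h0 : HasDerivAt (fun t : ℝ => (c x i + (qs i + t)) / ε) (1/ε) 0 := by
                simpa using (((hasDerivAt_id (0:ℝ)).const_add (qs i)).const_add (c x i)).div_const ε
              simpa using h0.exp
            · simp only [if_neg hi]
              exact hasDerivAt_const 0 _
          rw [Finset.sum_ite_eq' univ i0, if_pos (mem_univ i0)] at hsum
          exact hsum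
        have hne : (∑ i, Real.exp ((c x i + (qs i + if i = i0 then (0:ℝ) else 0)) / ε)) ≠ 0 := by
          rw [hval]; exact (hZpos qs x).ne'
        have hl := hZt.log hne
        rwa [hval] at hl
      have hsumlog : HasDerivAt
          (fun t : ℝ => ∑ x, Real.log (∑ i, Real.exp ((c x i + (qs i + if i = i0 then t else 0)) / ε)))
          (∑ x, Real.exp ((c x i0 + qs i0) / ε) * (1/ε) / Z qs x) 0 :=
        HasDerivAt.fun_sum fun x _ => hlog x
      have htotal := hlin.sub (hsumlog.const_mul ε)
      have hφeq : φ = fun t => (∑ i, (qs i + if i = i0 then t else 0) * V i)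
          - ε * ∑ x, Real.log (∑ i, Real.exp ((c x i + (qs i + if i = i0 then t else 0)) / ε)) := by
        funext t; rfl
      rw [hφeq]
      exact htotal
    have hzero := hmax.hasDerivAt_eq_zero hder
    have he : ε * ∑ x, Real.exp ((c x i0 + qs i0) / ε) * (1/ε) / Z qs x
        = ∑ x, Real.exp ((c x i0 + qs i0) / ε) / Z qs x := by
      rw [Finset.mul_sum]
      refine Finset.sum_congr rfl fun x _ => ?_
      rw [show Real.exp ((c x i0 + qs i0) / ε) * (1/ε) / Z qs x
          = (1/ε) * (Real.exp ((c x i0 + qs i0) / ε) / Z qs x) from by ring,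
        ← mul_assoc, mul_one_div_cancel hε.ne', one_mul]
    linarith
  -- the optimal primal field
  set us : Ω → Fin I → ℝ := fun x i => Real.exp ((c x i + qs i) / ε) / Z qs x with hus
  have hus1 : ∀ x, (∀ i, 0 ≤ us x i) ∧ ∑ i, us x i = 1 := by
    intro x
    refine ⟨fun i => le_of_lt (div_pos (Real.exp_pos _) (hZpos qs x)), ?_⟩
    simp only [hus]
    rw [← Finset.sum_div]
    have hnum : ∑ i, Real.exp ((c x i + qs i) / ε) = Z qs x := rfl
    rw [hnum, div_self (hZpos qs x).ne']
  have hus2 : ∀ i, ∑ x, us x i = V i := hstat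
  have husP : P us = D qs := by
    have h := key_eq qs us hus2
    have hzero : ∀ x ∈ (univ : Finset Ω),
        (∑ i, (c x i + qs i) * us x i - ε * Real.log (Z qs x))
          - ε * ∑ i, us x i * Real.log (us x i) = 0 := by
      intro x _
      have hg := gibbs_eq hε (fun i => c x i + qs i)
      simp only [hus, hZ]
      linarith
    rw [Finset.sum_eq_zero hzero] at h
    linarith
  -- final assembly
  have hbddS : BddBelow {y : ℝ | ∃ u : Ω → Fin I → ℝ,
      (∀ x, (∀ i, 0 ≤ u x i) ∧ ∑ i, u x i = 1) ∧
      (∀ i, ∑ x : Ω, u x i = V i) ∧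
      y = ∑ x : Ω, ∑ i, (-(c x i * u x i) + ε * u x i * Real.log (u x i))} := by
    refine ⟨D qs, fun y hy => ?_⟩
    obtain ⟨u, h1, h2, rfl⟩ := hy
    exact weak qs u h1 h2
  have hbddT : BddAbove {y : ℝ | ∃ q : Fin I → ℝ,
      y = (∑ i, q i * V i)
        - ε * ∑ x : Ω, Real.log (∑ i, Real.exp ((c x i + q i) / ε))} := by
    refine ⟨P us, fun y hy => ?_⟩
    obtain ⟨q, rfl⟩ := hy
    exact weak q us hus1 hus2
  apply le_antisymm
  · calc sInf {y : ℝ | ∃ u : Ω → Fin I → ℝ,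
        (∀ x, (∀ i, 0 ≤ u x i) ∧ ∑ i, u x i = 1) ∧
        (∀ i, ∑ x : Ω, u x i = V i) ∧
        y = ∑ x : Ω, ∑ i, (-(c x i * u x i) + ε * u x i * Real.log (u x i))}
        ≤ P us := csInf_le hbddS ⟨us, hus1, hus2, rfl⟩
      _ = D qs := husP
      _ ≤ sSup {y : ℝ | ∃ q : Fin I → ℝ,
          y = (∑ i, q i * V i)
            - ε * ∑ x : Ω, Real.log (∑ i, Real.exp ((c x i + q i) / ε))} :=
        le_csSup hbddT ⟨qs, rfl⟩
  · refine csSup_le ⟨D 0, 0, rfl⟩ fun y hy => ?_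
    obtain ⟨q, rfl⟩ := hy
    refine le_csInf ⟨P us, us, hus1, hus2, rfl⟩ fun z hz => ?_
    obtain ⟨u, h1, h2, rfl⟩ := hz
    exact weak q u h1 h2
end

section
/- (Proposition 3: the dual maximizer yields the volume-preserving primal minimizer via softmax.) Let Ω be a finite nonempty set, I ≥ 1, ε > 0, let c : Ω → ℝ^I, let V ∈ ℝ^I, and define the dual objective D(q) = ∑_{i=1}^I q_i V_i − ε ∑_{x ∈ Ω} log( ∑_{i=1}^I exp((c_i(x) + q_i)/ε) ) for q ∈ ℝ^I. Suppose q̃ ∈ ℝ^I is a global maximizer of D. Define ũ : Ω → ℝ^I pointwise by ũ(x) = S_ε(c(x) + q̃), i.e. ũ_i(x) = exp((c_i(x) + q̃_i)/ε) / ∑_{j=1}^I exp((c_j(x) + q̃_j)/ε). Then: (a) ũ(x) ∈ U for every x and ∑_{x ∈ Ω} ũ_i(x) = V_i for every i; (b) the primal value at ũ equals D(q̃), i.e. ∑_{x ∈ Ω} ∑_{i=1}^I [ −c_i(x) ũ_i(x) + ε ũ_i(x) log(ũ_i(x)) ] = D(q̃); consequently ũ minimizes the primal energy over all u : Ω → ℝ^I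 with u(x) ∈ U for every x and ∑_{x ∈ Ω} u_i(x) = V_i for every i. -/
open Finset Real

/-- Gibbs / log-sum-exp inequality on the simplex. -/
lemma vp_gibbs_aux {I : ℕ} (hI : Nonempty (Fin I)) (ε : ℝ) (hε : 0 < ε)
    (a u : Fin I → ℝ) (hu : ∀ i, 0 ≤ u i) (hsum : ∑ i, u i = 1) :
    -ε * Real.log (∑ i, Real.exp (a i / ε)) ≤
      ∑ i, (-(a i * u i) + ε * u i * Real.log (u i)) := by
  set Z : ℝ := ∑ i, Real.exp (a i / ε) with hZdef
  have hZ : 0 < Z := Finset.sum_pos (fun i _ => Real.exp_pos _) Finset.univ_nonempty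
  set p : Fin I → ℝ := fun i => Real.exp (a i / ε) / Z with hp
  have hpsum : ∑ i, p i = 1 := by
    rw [hp, ← Finset.sum_div, div_self hZ.ne']
  have hlogp : ∀ i, Real.log (p i) = a i / ε - Real.log Z := fun i => by
    rw [hp]; rw [Real.log_div (Real.exp_ne_zero _) hZ.ne', Real.log_exp]
  have key : ∑ i, u i * Real.log (p i) ≤ ∑ i, u i * Real.log (u i) := by
    have h1 : ∀ i ∈ Finset.univ, u i - p i ≤ u i * Real.log (u i) - u i * Real.log (p i) := by
      intro i _
      rcases eq_or_lt_of_le (hu i) with h0 | h0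
      · rw [← h0]; simp
        exact le_of_lt (div_pos (Real.exp_pos _) hZ)
      · have hpi : 0 < p i := div_pos (Real.exp_pos _) hZ
        have := Real.log_le_sub_one_of_pos (show 0 < p i / u i from div_pos hpi h0)
        have h2 : Real.log (p i) - Real.log (u i) ≤ p i / u i - 1 := by
          rwa [Real.log_div hpi.ne' h0.ne'] at this
        have h3 := mul_le_mul_of_nonneg_left h2 (hu i)
        have h4 : u i * (p i / u i) = p i := by field_simp
        rw [mul_sub, mul_sub, mul_one, h4] at h3
        linarith
    have := Finset.sum_le_sum h1
    rw [Finset.sum_sub_distrib, Finset.sum_sub_distrib, hsum, hpsum] at this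
    linarith
  have hrw : ∑ i, u i * Real.log (p i) = (∑ i, u i * a i) / ε - Real.log Z := by
    calc ∑ i, u i * Real.log (p i) = ∑ i, (u i * a i / ε - u i * Real.log Z) := by
          refine Finset.sum_congr rfl fun i _ => ?_
          rw [hlogp i]; ring
      _ = (∑ i, u i * a i / ε) - (∑ i, u i) * Real.log Z := by
          rw [Finset.sum_sub_distrib, Finset.sum_mul]
      _ = (∑ i, u i * a i) / ε - Real.log Z := by
          rw [hsum, one_mul, Finset.sum_div]
  rw [hrw] at key
  have hsplit : ∑ i, (-(a i * u i) + ε * u i * Real.log (u i))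
      = -(∑ i, u i * a i) + ε * ∑ i, u i * Real.log (u i) := by
    rw [Finset.mul_sum, ← Finset.sum_neg_distrib, ← Finset.sum_add_distrib]
    exact Finset.sum_congr rfl fun i _ => by ring
  rw [hsplit]
  have h4 := mul_le_mul_of_nonneg_left key (le_of_lt hε)
  rw [mul_sub, mul_div_cancel₀ _ hε.ne'] at h4
  linarith

/-- First-order optimality of the dual maximizer gives the volume constraint. -/
lemma vp_vol_aux {Ω : Type*} [Fintype Ω] {I : ℕ} (hI : Nonempty (Fin I)) (ε : ℝ) (hε : 0 < ε)
    (c : Ω → Fin I → ℝ) (V : Fin I → ℝ) (qt : Fin I → ℝ)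
    (hqt : ∀ q : Fin I → ℝ,
      (∑ i, q i * V i) - ε * ∑ x : Ω, Real.log (∑ i, Real.exp ((c x i + q i) / ε))
      ≤ (∑ i, qt i * V i) - ε * ∑ x : Ω, Real.log (∑ i, Real.exp ((c x i + qt i) / ε)))
    (i₀ : Fin I) :
    ∑ x : Ω, Real.exp ((c x i₀ + qt i₀) / ε) / (∑ j, Real.exp ((c x j + qt j) / ε)) = V i₀ := by
  classical
  set ind : Fin I → ℝ := fun j => if j = i₀ then 1 else 0 with hind
  set φ : ℝ → ℝ := fun t =>
    (∑ j, (qt j + ind j * t) * V j)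
      - ε * ∑ x : Ω, Real.log (∑ j, Real.exp ((c x j + (qt j + ind j * t)) / ε)) with hφ
  have hφmax : ∀ t, φ t ≤ φ 0 := by
    intro t
    have := hqt (fun j => qt j + ind j * t)
    simpa [hφ] using this
  have hZ : ∀ x : Ω, (0:ℝ) < ∑ j, Real.exp ((c x j + qt j) / ε) :=
    fun x => Finset.sum_pos (fun j _ => Real.exp_pos _) Finset.univ_nonempty
  have hd : HasDerivAt φ
      (V i₀ - ε * ∑ x : Ω,
        (Real.exp ((c x i₀ + qt i₀) / ε) / ε) / (∑ j, Real.exp ((c x j + qt j) / ε))) 0 := by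
    have hlin : HasDerivAt (fun t => ∑ j, (qt j + ind j * t) * V j) (V i₀) 0 := by
      have : HasDerivAt (fun t => ∑ j, (qt j + ind j * t) * V j) (∑ j, ind j * V j) 0 := by
        apply HasDerivAt.fun_sum
        intro j _
        have h1 : HasDerivAt (fun t : ℝ => qt j + ind j * t) (ind j) 0 := by
          simpa using ((hasDerivAt_id (0:ℝ)).const_mul (ind j)).const_add (qt j)
        exact h1.mul_const (V j)
      have hsum : ∑ j, ind j * V j = V i₀ := by
        simp [hind]
      rwa [hsum] at this
    have hlog : ∀ x : Ω, HasDerivAt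
        (fun t => Real.log (∑ j, Real.exp ((c x j + (qt j + ind j * t)) / ε)))
        ((Real.exp ((c x i₀ + qt i₀) / ε) / ε) / (∑ j, Real.exp ((c x j + qt j) / ε))) 0 := by
      intro x
      have hin : HasDerivAt (fun t => ∑ j, Real.exp ((c x j + (qt j + ind j * t)) / ε))
          (Real.exp ((c x i₀ + qt i₀) / ε) / ε) 0 := by
        have : HasDerivAt (fun t => ∑ j, Real.exp ((c x j + (qt j + ind j * t)) / ε))
            (∑ j, Real.exp ((c x j + qt j) / ε) * (ind j / ε)) 0 := by
          apply HasDerivAt.fun_sum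
          intro j _
          have h1 : HasDerivAt (fun t : ℝ => (c x j + (qt j + ind j * t)) / ε) (ind j / ε) 0 := by
            have h2 : HasDerivAt (fun t : ℝ => c x j + (qt j + ind j * t)) (ind j) 0 := by
              simpa using
                (((hasDerivAt_id (0:ℝ)).const_mul (ind j)).const_add (qt j)).const_add (c x j)
            exact h2.div_const ε
          have := h1.exp
          simpa using this
        have hsum2 : ∑ j, Real.exp ((c x j + qt j) / ε) * (ind j / ε)
            = Real.exp ((c x i₀ + qt i₀) / ε) / ε := by
          rw [show (fun j => Real.exp ((c x j + qt j) / ε) * (ind j / ε))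
              = fun j => if j = i₀ then Real.exp ((c x j + qt j) / ε) / ε else 0 by
            funext j; by_cases h : j = i₀ <;> simp [hind, h] <;> ring]
          simp
        rwa [hsum2] at this
      have := hin.log (by
        have : (0:ℝ) < ∑ j, Real.exp ((c x j + (qt j + ind j * 0)) / ε) := by
          simpa using hZ x
        exact this.ne')
      simpa using this
    exact hlin.sub (((HasDerivAt.fun_sum (fun x _ => hlog x))).const_mul ε)
  have hloc : IsLocalMax φ 0 := Filter.Eventually.of_forall hφmax
  have h0 := hloc.hasDerivAt_eq_zero hd
  have hsimp : ε * ∑ x : Ω,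
      (Real.exp ((c x i₀ + qt i₀) / ε) / ε) / (∑ j, Real.exp ((c x j + qt j) / ε))
      = ∑ x : Ω, Real.exp ((c x i₀ + qt i₀) / ε) / (∑ j, Real.exp ((c x j + qt j) / ε)) := by
    rw [Finset.mul_sum]
    refine Finset.sum_congr rfl fun x _ => ?_
    field_simp
  rw [hsimp] at h0
  linarith [h0]

/-- Proposition 3: if `q̃` maximizes the dual objective
`D(q) = ⟨q,V⟩ - ε ∑ₓ log ∑ᵢ exp((cᵢ(x)+qᵢ)/ε)`, then `ũ(x) = Sε(c(x) + q̃)` is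
primal-feasible (pointwise in the simplex with the prescribed volumes), its primal
value equals `D(q̃)`, and it minimizes the primal energy over all feasible fields. -/
theorem vp_std_dual_maximizer_gives_primal_minimizer
    (Ω : Type*) [Fintype Ω] [Nonempty Ω] (I : ℕ) (hI : 1 ≤ I) (ε : ℝ) (hε : 0 < ε)
    (c : Ω → Fin I → ℝ) (V : Fin I → ℝ)
    (qt : Fin I → ℝ)
    (hqt : ∀ q : Fin I → ℝ,
      (∑ i, q i * V i) - ε * ∑ x : Ω, Real.log (∑ i, Real.exp ((c x i + q i) / ε))
      ≤ (∑ i, qt i * V i) - ε * ∑ x : Ω, Real.log (∑ i, Real.exp ((c x i + qt i) / ε)))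
    (ut : Ω → Fin I → ℝ)
    (hut : ∀ x i, ut x i =
      Real.exp ((c x i + qt i) / ε) / ∑ j, Real.exp ((c x j + qt j) / ε)) :
    (∀ x, (∀ i, 0 ≤ ut x i) ∧ ∑ i, ut x i = 1) ∧
    (∀ i, ∑ x : Ω, ut x i = V i) ∧
    (∑ x : Ω, ∑ i, (-(c x i * ut x i) + ε * ut x i * Real.log (ut x i))
      = (∑ i, qt i * V i)
        - ε * ∑ x : Ω, Real.log (∑ i, Real.exp ((c x i + qt i) / ε))) ∧
    (∀ u : Ω → Fin I → ℝ,
      (∀ x, (∀ i, 0 ≤ u x i) ∧ ∑ i, u x i = 1) →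
      (∀ i, ∑ x : Ω, u x i = V i) →
      ∑ x : Ω, ∑ i, (-(c x i * ut x i) + ε * ut x i * Real.log (ut x i))
        ≤ ∑ x : Ω, ∑ i, (-(c x i * u x i) + ε * u x i * Real.log (u x i))) := by
  have hNI : Nonempty (Fin I) := ⟨⟨0, hI⟩⟩
  have hZ : ∀ x : Ω, (0:ℝ) < ∑ j, Real.exp ((c x j + qt j) / ε) :=
    fun x => Finset.sum_pos (fun j _ => Real.exp_pos _) Finset.univ_nonempty
  -- (a) simplex feasibility
  have hfeas : ∀ x, (∀ i, 0 ≤ ut x i) ∧ ∑ i, ut x i = 1 := by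
    intro x
    constructor
    · intro i
      rw [hut]
      exact div_nonneg (Real.exp_nonneg _) (hZ x).le
    · have : ∑ i, ut x i
          = ∑ i, Real.exp ((c x i + qt i) / ε) / ∑ j, Real.exp ((c x j + qt j) / ε) :=
        Finset.sum_congr rfl fun i _ => hut x i
      rw [this, ← Finset.sum_div, div_self (hZ x).ne']
  -- (a) volume constraint
  have hvol : ∀ i, ∑ x : Ω, ut x i = V i := by
    intro i
    have : ∑ x : Ω, ut x i
        = ∑ x : Ω, Real.exp ((c x i + qt i) / ε) / (∑ j, Real.exp ((c x j + qt j) / ε)) :=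
      Finset.sum_congr rfl fun x _ => hut x i
    rw [this]
    exact vp_vol_aux hNI ε hε c V qt hqt i
  -- positivity of ut
  have hpos : ∀ x i, 0 < ut x i := fun x i => by
    rw [hut]; exact div_pos (Real.exp_pos _) (hZ x)
  -- log formula
  have hlog : ∀ x i, Real.log (ut x i)
      = (c x i + qt i) / ε - Real.log (∑ j, Real.exp ((c x j + qt j) / ε)) := by
    intro x i
    rw [hut, Real.log_div (Real.exp_ne_zero _) (hZ x).ne', Real.log_exp]
  -- (b) primal value = dual value
  have hptws : ∀ x : Ω, ∑ i, (-(c x i * ut x i) + ε * ut x i * Real.log (ut x i))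
      = (∑ i, qt i * ut x i)
        - ε * Real.log (∑ j, Real.exp ((c x j + qt j) / ε)) := by
    intro x
    set L := Real.log (∑ j, Real.exp ((c x j + qt j) / ε)) with hL
    have hterm : ∀ i, -(c x i * ut x i) + ε * ut x i * Real.log (ut x i)
        = qt i * ut x i - ε * L * ut x i := by
      intro i
      rw [hlog x i, ← hL]
      field_simp
      ring
    rw [Finset.sum_congr rfl fun i _ => hterm i, Finset.sum_sub_distrib]
    congr 1
    calc ∑ i, ε * L * ut x i = ε * L * ∑ i, ut x i := by rw [Finset.mul_sum]
      _ = ε * L := by rw [(hfeas x).2, mul_one]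
  have hswap : ∀ u : Ω → Fin I → ℝ, (∀ i, ∑ x : Ω, u x i = V i) →
      ∑ x : Ω, ∑ i, qt i * u x i = ∑ i, qt i * V i := by
    intro u hv
    rw [Finset.sum_comm]
    refine Finset.sum_congr rfl fun i _ => ?_
    rw [← Finset.mul_sum, hv i]
  have hb : ∑ x : Ω, ∑ i, (-(c x i * ut x i) + ε * ut x i * Real.log (ut x i))
      = (∑ i, qt i * V i)
        - ε * ∑ x : Ω, Real.log (∑ i, Real.exp ((c x i + qt i) / ε)) := by
    rw [Finset.sum_congr rfl fun x _ => hptws x, Finset.sum_sub_distrib,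
      hswap ut hvol, ← Finset.mul_sum]
  refine ⟨hfeas, hvol, hb, ?_⟩
  intro u hufeas huvol
  rw [hb]
  -- lower bound for any feasible u
  have hgibbs : ∀ x : Ω,
      -ε * Real.log (∑ j, Real.exp ((c x j + qt j) / ε))
        ≤ ∑ i, (-((c x i + qt i) * u x i) + ε * u x i * Real.log (u x i)) :=
    fun x => vp_gibbs_aux hNI ε hε (fun i => c x i + qt i) (u x)
      (hufeas x).1 (hufeas x).2
  have hsum := Finset.sum_le_sum (fun x (_ : x ∈ Finset.univ) => hgibbs x)
  have hLHS : ∑ x : Ω, -ε * Real.log (∑ j, Real.exp ((c x j + qt j) / ε))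
      = -(ε * ∑ x : Ω, Real.log (∑ i, Real.exp ((c x i + qt i) / ε))) := by
    rw [Finset.mul_sum, ← Finset.sum_neg_distrib]
    exact Finset.sum_congr rfl fun x _ => by ring
  have hRHS : ∑ x : Ω, ∑ i, (-((c x i + qt i) * u x i) + ε * u x i * Real.log (u x i))
      = (∑ x : Ω, ∑ i, (-(c x i * u x i) + ε * u x i * Real.log (u x i)))
        - ∑ x : Ω, ∑ i, qt i * u x i := by
    rw [← Finset.sum_sub_distrib]
    refine Finset.sum_congr rfl fun x _ => ?_
    rw [← Finset.sum_sub_distrib]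
    exact Finset.sum_congr rfl fun i _ => by ring
  rw [hLHS, hRHS, hswap u huvol] at hsum
  linarith
end
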